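/- Let n ≥ 4 and let Δ_n ⊆ R be the ideal generated by the 2×2 minors of the 2×n matrix whose first row is (x_1, x_2, …, x_n) and whose second row is (x_n, x_1, x_2, …, x_{n−1}). Then for every integer i ≥ 1 the degree-i homogeneous component of R/Δ_n has ℂ-dimension n; equivalently, dim_ℂ(Δ_n ∩ R_i) = C(n+i−1, n−1) − n for every i ≥ 1. -/

import Mathlib

open MvPolynomial

noncomputable section

/-- `R n = ℂ[x_1, …, x_n]`. -/
abbrev R (n : ℕ) : Type := MvPolynomial (Fin n) ℂ

/-- `R_d`, the ℂ-subspace of homogeneous polynomials of degree `d`. -/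
def Rdeg (n d : ℕ) : Submodule ℂ (R n) := homogeneousSubmodule (Fin n) ℂ d

/-- The cyclic predecessor on `Fin n`: `prev c` is `c - 1 mod n`
(so that, with `x_{i+1} = X i`, the second row `(x_n, x_1, …, x_{n-1})` of the
matrix has entry `X (prev c)` in column `c`). -/
def prev {n : ℕ} (c : Fin n) : Fin n := ⟨(c.val + (n - 1)) % n, Nat.mod_lt _ c.pos⟩

/-- `Δ_n`: the ideal generated by the 2×2 minors of the 2×n matrix with rows
`(x_1, x_2, …, x_n)` and `(x_n, x_1, …, x_{n-1})`. -/
def Delta (n : ℕ) : Ideal (R n) :=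
  Ideal.span { f : R n | ∃ c d : Fin n, f = X c * X (prev d) - X d * X (prev c) }

namespace DeltaHilbertAux

variable {n : ℕ}

open Fin.NatCast

lemma prev_eq [NeZero n] (hn : 2 ≤ n) (c : Fin n) : prev c = c - 1 := by
  ext
  rw [Fin.sub_def]
  simp [prev, Fin.val_one', Nat.mod_eq_of_lt (show 1 < n by omega), Nat.add_comm]

lemma gen_mem [NeZero n] (hn : 2 ≤ n) (a b : Fin n) :
    (X (a+1) * X (b-1) - X a * X b : R n) ∈ Delta n := by
  have h : (X (a+1) * X (b-1) - X a * X b : R n)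
      = X (a+1) * X (prev b) - X b * X (prev (a+1)) := by
    rw [prev_eq hn, prev_eq hn, add_sub_cancel_right]; ring
  rw [h]; exact Ideal.subset_span ⟨a+1, b, rfl⟩

lemma shift_mem [NeZero n] (hn : 2 ≤ n) (t : ℕ) (a b : Fin n) :
    (X (a + (t : Fin n)) * X (b - (t : Fin n)) - X a * X b : R n) ∈ Delta n := by
  induction t with
  | zero => simp
  | succ t ih =>
      have h1 : ((t+1 : ℕ) : Fin n) = (t : Fin n) + 1 := by push_cast; ring
      have h2 : a + ((t : Fin n) + 1) = (a + t) + 1 := by rw [add_assoc]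
      have h3 : b - ((t : Fin n) + 1) = (b - t) - 1 := by rw [sub_sub]
      have e : (X (a + ((t+1:ℕ) : Fin n)) * X (b - ((t+1:ℕ):Fin n)) - X a * X b : R n)
        = (X ((a + t) + 1) * X ((b - t) - 1) - X (a+t) * X (b-t))
          + (X (a + t) * X (b - t) - X a * X b) := by
        rw [h1, h2, h3]; ring
      rw [e]; exact add_mem (gen_mem hn _ _) ih

lemma move_mem [NeZero n] (hn : 2 ≤ n) (w c : Fin n) :
    (X (w + c) * X 0 - X w * X c : R n) ∈ Delta n := by
  have h := shift_mem hn c.val w c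
  rwa [Fin.cast_val_eq_self, sub_self] at h

/-- The weight of an exponent vector: `∑ c, a c • c` in `Fin n`. -/
def wt [NeZero n] (a : Fin n →₀ ℕ) : Fin n := a.sum fun c e => e • c

lemma wt_add [NeZero n] (a b : Fin n →₀ ℕ) : wt (a + b) = wt a + wt b :=
  Finsupp.sum_add_index' (fun c => zero_nsmul c) (fun c e f => add_nsmul c e f)

lemma wt_single [NeZero n] (c : Fin n) : wt (Finsupp.single c 1) = c := by
  rw [wt, Finsupp.sum_single_index (zero_nsmul c), one_nsmul]

lemma degree_add' (a b : Fin n →₀ ℕ) : (a + b).degree = a.degree + b.degree := by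
  simp only [Finsupp.degree_eq_weight_one]
  exact map_add _ a b

lemma degree_single' (c : Fin n) (k : ℕ) : (Finsupp.single c k).degree = k := by
  simp only [Finsupp.degree_eq_weight_one]
  rw [Finsupp.weight_apply, Finsupp.sum_single_index] <;> simp

lemma exists_dec (a : Fin n →₀ ℕ) (ha : a.degree ≠ 0) :
    ∃ c a', a = a' + Finsupp.single c 1 ∧ a'.degree + 1 = a.degree := by
  have hs : a.support.Nonempty := by
    rw [Finset.nonempty_iff_ne_empty]
    intro h
    exact ha (by rw [Finsupp.degree_eq_zero_iff]; exact Finsupp.support_eq_empty.mp h)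
  obtain ⟨c, hc⟩ := hs
  have h1 : Finsupp.single c 1 ≤ a := by
    rw [Finsupp.single_le_iff]
    exact Nat.one_le_iff_ne_zero.mpr (Finsupp.mem_support_iff.mp hc)
  refine ⟨c, a - Finsupp.single c 1, (tsub_add_cancel_of_le h1).symm, ?_⟩
  conv_rhs => rw [← tsub_add_cancel_of_le h1]
  rw [degree_add', degree_single']

lemma mon_reduce [NeZero n] (hn : 2 ≤ n) (d : ℕ) :
    ∀ (a : Fin n →₀ ℕ), a.degree = d + 1 →
      ((monomial a 1 : R n) - X 0 ^ d * X (wt a)) ∈ Delta n := by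
  induction d with
  | zero =>
      intro a ha
      obtain ⟨c, a', rfl, hd⟩ := exists_dec a (by omega)
      have ha' : a' = 0 := by
        rw [ha] at hd
        rw [← Finsupp.degree_eq_zero_iff]; omega
      subst ha'
      rw [zero_add, wt_single]
      have h : (monomial (Finsupp.single c 1) 1 : R n) = X c := rfl
      rw [h, pow_zero, one_mul, sub_self]
      exact zero_mem _
  | succ d ih =>
      intro a ha
      obtain ⟨c, a', rfl, hd⟩ := exists_dec a (by omega)
      rw [ha] at hd
      have ha' : a'.degree = d + 1 := by omega
      have hmon : (monomial (a' + Finsupp.single c 1) 1 : R n) = monomial a' 1 * X c := by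
        rw [monomial_add_single, pow_one]
      have hwt : wt (a' + Finsupp.single c 1) = wt a' + c := by
        rw [wt_add, wt_single]
      have key : ((monomial (a' + Finsupp.single c 1) 1 : R n)
            - X 0 ^ (d+1) * X (wt (a' + Finsupp.single c 1)))
          = X c * ((monomial a' 1 : R n) - X 0 ^ d * X (wt a'))
            - X 0 ^ d * (X (wt a' + c) * X 0 - X (wt a') * X c) := by
        rw [hmon, hwt]; ring
      rw [key]
      exact sub_mem (Ideal.mul_mem_left _ _ (ih a' ha'))
        (Ideal.mul_mem_left _ _ (move_mem hn _ _))

/-- A primitive `n`-th root of unity. -/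
def zeta (n : ℕ) : ℂ := Complex.exp (2 * Real.pi * Complex.I / n)

lemma zeta_prim [NeZero n] : IsPrimitiveRoot (zeta n) n :=
  Complex.isPrimitiveRoot_exp n (NeZero.ne n)

lemma zeta_pow_mod [NeZero n] (a : ℕ) : zeta n ^ (a % n) = zeta n ^ a := by
  conv_rhs => rw [← Nat.div_add_mod a n]
  rw [pow_add, pow_mul, zeta_prim.pow_eq_one, one_pow, one_mul]

/-- The evaluation points: `pt n k c = ζ^(k·c)`. -/
def pt (n : ℕ) (k : Fin n) : Fin n → ℂ := fun c => zeta n ^ (k.val * c.val)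

lemma aeval_pt_delta [NeZero n] (k : Fin n) {f : R n} (hf : f ∈ Delta n) :
    aeval (pt n k) f = 0 := by
  have hle : Delta n ≤ RingHom.ker (aeval (pt n k) : R n →ₐ[ℂ] ℂ).toRingHom := by
    rw [Delta, Ideal.span_le]
    rintro g ⟨c, d, rfl⟩
    simp only [SetLike.mem_coe, RingHom.mem_ker, AlgHom.toRingHom_eq_coe, RingHom.coe_coe,
      map_sub, map_mul, aeval_X]
    show pt n k c * pt n k (prev d) - pt n k d * pt n k (prev c) = 0
    have hv : ∀ e : Fin n, pt n k (prev e) = zeta n ^ (k.val * (e.val + (n-1))) := by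
      intro e
      show zeta n ^ (k.val * ((e.val + (n-1)) % n)) = _
      rw [pow_mul', pow_mul', zeta_pow_mod]
    rw [hv, hv]
    show zeta n ^ (k.val * c.val) * zeta n ^ (k.val * (d.val + (n-1)))
        - zeta n ^ (k.val * d.val) * zeta n ^ (k.val * (c.val + (n-1))) = 0
    rw [← pow_add, ← pow_add]
    ring_nf
  exact hle hf

lemma vand_surj [NeZero n] (y : Fin n → ℂ) :
    ∃ x : Fin n → ℂ, ∀ k : Fin n, (∑ w : Fin n, x w * zeta n ^ (k.val * w.val)) = y k := by
  set v : Fin n → ℂ := fun w => zeta n ^ w.val with hv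
  have hinj : Function.Injective v := by
    intro w1 w2 h
    exact Fin.ext (zeta_prim.pow_inj w1.isLt w2.isLt h)
  set M : Matrix (Fin n) (Fin n) ℂ := Matrix.of fun k w => zeta n ^ (k.val * w.val) with hM
  have hMv : M = Matrix.vandermonde v := by
    ext k w
    show zeta n ^ (k.val * w.val) = (zeta n ^ k.val) ^ w.val
    rw [pow_mul]
  have hdet : M.det ≠ 0 := by
    rw [hMv]
    exact Matrix.det_vandermonde_ne_zero_iff.mpr hinj
  refine ⟨M⁻¹.mulVec y, fun k => ?_⟩
  have hMy : M.mulVec (M⁻¹.mulVec y) = y := by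
    rw [Matrix.mulVec_mulVec, Matrix.mul_nonsing_inv M (isUnit_iff_ne_zero.mpr hdet),
      Matrix.one_mulVec]
  calc (∑ w : Fin n, M⁻¹.mulVec y w * zeta n ^ (k.val * w.val))
      = M.mulVec (M⁻¹.mulVec y) k := by
        rw [Matrix.mulVec]
        simp [dotProduct, hM, mul_comm]
    _ = y k := by rw [hMy]

end DeltaHilbertAux

open DeltaHilbertAux Module Submodule

set_option maxHeartbeats 1000000 in
set_option synthInstance.maxHeartbeats 400000 in
/-- For `n ≥ 4` and every `i ≥ 1`, the degree-`i` homogeneous component of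
`R/Δ_n` has ℂ-dimension `n`; equivalently `dim_ℂ (Δ_n ∩ R_i) = C(n+i−1, n−1) − n`. -/
theorem delta_hilbert_function (n : ℕ) (hn : 4 ≤ n) (i : ℕ) (hi : 1 ≤ i) :
    Module.finrank ℂ
      (↥(Rdeg n i) ⧸ Submodule.comap (Rdeg n i).subtype ((Delta n).restrictScalars ℂ)) = n ∧
    Module.finrank ℂ ↥((Delta n).restrictScalars ℂ ⊓ Rdeg n i)
      = Nat.choose (n + i - 1) (n - 1) - n := by
  classical
  haveI : NeZero n := ⟨by omega⟩
  have hn2 : 2 ≤ n := by omega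
  set s : Set (Fin n →₀ ℕ) := {d | d.degree = i} with hs
  have hR : Rdeg n i = restrictSupport ℂ s := by
    rw [Rdeg, homogeneousSubmodule_eq_finsupp_supported]
    rfl
  -- finiteness and dimension of `Rdeg n i`
  have hfinS : Finite ↥s :=
    ((Finsupp.finite_of_degree_le i).subset (fun d hd => le_of_eq hd)).to_subtype
  haveI := Fintype.ofFinite ↥s
  haveI hMF : Module.Finite ℂ ↥(restrictSupport ℂ s) :=
    Module.Finite.of_basis (basisRestrictSupport ℂ s)
  haveI hMF' : Module.Finite ℂ ↥(Rdeg n i) := hR ▸ hMF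
  have hcard : Fintype.card ↥s = (n + i - 1).choose (n - 1) := by
    have e : Sym (Fin n) i ≃ ↥s :=
      (Sym.equivNatSum (Fin n) i).trans (Equiv.subtypeEquivRight (fun P => Iff.rfl))
    have h1 : n + i - 1 - i = n - 1 := by omega
    rw [← Fintype.card_congr e, Sym.card_sym_eq_choose, Fintype.card_fin, ← h1,
      Nat.choose_symm (show i ≤ n + i - 1 by omega)]
  have hrankM : finrank ℂ ↥(Rdeg n i) = (n + i - 1).choose (n - 1) := by
    rw [hR, finrank_eq_card_basis (basisRestrictSupport ℂ s), hcard]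
  -- the ambient span description of `Rdeg n i`
  have hNspan : Rdeg n i = Submodule.span ℂ ((fun a => (monomial a 1 : R n)) '' s) := by
    rw [hR, restrictSupport, AddMonoidAlgebra.supported_eq_span_single]
    rfl
  -- the distinguished degree-i elements
  set Sv : Fin n → R n := fun w => X 0 ^ (i - 1) * X w with hSvdef
  have hSv : ∀ w, Sv w ∈ Rdeg n i := by
    intro w
    have h := (isHomogeneous_X_pow (R := ℂ) (0 : Fin n) (i - 1)).mul (isHomogeneous_X ℂ w)
    rw [show i - 1 + 1 = i by omega] at h
    exact (mem_homogeneousSubmodule _ _).mpr h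
  set SS : Fin n → ↥(Rdeg n i) := fun w => ⟨Sv w, hSv w⟩ with hSSdef
  set K : Submodule ℂ ↥(Rdeg n i) :=
    Submodule.comap (Rdeg n i).subtype ((Delta n).restrictScalars ℂ) with hK
  -- Step A : ambient spanning
  have hA : Rdeg n i ≤ Submodule.span ℂ (Set.range Sv)
      ⊔ (Rdeg n i ⊓ (Delta n).restrictScalars ℂ) := by
    refine le_trans (le_of_eq hNspan) (Submodule.span_le.mpr ?_)
    rintro f ⟨a, ha, rfl⟩
    have hadeg : a.degree = i := ha
    have h1 : ((monomial a 1 : R n) - Sv (wt a))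
        ∈ Rdeg n i ⊓ (Delta n).restrictScalars ℂ := by
      refine Submodule.mem_inf.mpr ⟨?_, ?_⟩
      · exact sub_mem ((mem_homogeneousSubmodule _ _).mpr
          (isHomogeneous_monomial _ hadeg)) (hSv (wt a))
      · exact mon_reduce hn2 (i - 1) a (by omega)
    have h2 : Sv (wt a) ∈ Submodule.span ℂ (Set.range Sv) :=
      Submodule.subset_span ⟨wt a, rfl⟩
    have h3 : (monomial a 1 : R n) = ((monomial a 1 : R n) - Sv (wt a)) + Sv (wt a) := by ring
    show (monomial a 1 : R n) ∈ ↑(Submodule.span ℂ (Set.range Sv)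
      ⊔ (Rdeg n i ⊓ (Delta n).restrictScalars ℂ))
    rw [h3]
    exact add_mem (Submodule.mem_sup_right h1) (Submodule.mem_sup_left h2)
  -- Step B : spanning inside `Rdeg n i`
  have hP : Submodule.span ℂ (Set.range SS) ⊔ K = ⊤ := by
    apply Submodule.map_injective_of_injective (Submodule.injective_subtype (Rdeg n i))
    rw [Submodule.map_sup, Submodule.map_span, Submodule.map_subtype_top,
      Submodule.map_comap_subtype]
    have himg : (Rdeg n i).subtype '' Set.range SS = Set.range Sv := by
      rw [← Set.range_comp]; rfl
    rw [himg]
    refine le_antisymm (sup_le ?_ inf_le_left) hA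
    exact Submodule.span_le.mpr (by rintro f ⟨w, rfl⟩; exact hSv w)
  -- Step C : spanning of the quotient
  have hspan : Submodule.span ℂ (Set.range (fun w => K.mkQ (SS w))) = ⊤ := by
    have hmap : Submodule.map K.mkQ (Submodule.span ℂ (Set.range SS) ⊔ K) = ⊤ := by
      rw [hP, Submodule.map_top, Submodule.range_mkQ]
    rw [Submodule.map_sup, Submodule.map_span, ← Set.range_comp] at hmap
    have hK0 : Submodule.map K.mkQ K = ⊥ := by
      rw [eq_bot_iff, Submodule.map_le_iff_le_comap, Submodule.comap_bot, Submodule.ker_mkQ]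
    rw [hK0, sup_bot_eq] at hmap
    exact hmap
  -- upper bound
  have hub : finrank ℂ (↥(Rdeg n i) ⧸ K) ≤ n := by
    have := finrank_le_of_span_eq_top hspan
    simpa using this
  -- lower bound via evaluation
  set E : R n →ₗ[ℂ] (Fin n → ℂ) :=
    LinearMap.pi (fun k => (aeval (pt n k) : R n →ₐ[ℂ] ℂ).toLinearMap) with hE
  set Φ : ↥(Rdeg n i) →ₗ[ℂ] (Fin n → ℂ) := E ∘ₗ (Rdeg n i).subtype with hΦ
  have hker : K ≤ LinearMap.ker Φ := by
    rintro ⟨f, hf⟩ hKm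
    have hfD : f ∈ Delta n := hKm
    rw [LinearMap.mem_ker]
    funext k
    exact aeval_pt_delta k hfD
  set ψ : (↥(Rdeg n i) ⧸ K) →ₗ[ℂ] (Fin n → ℂ) := K.liftQ Φ hker with hψ
  have hψS : ∀ w : Fin n, ψ (K.mkQ (SS w)) = fun k : Fin n => zeta n ^ (k.val * w.val) := by
    intro w
    rw [Submodule.mkQ_apply, Submodule.liftQ_apply]
    funext k
    show aeval (pt n k) (Sv w) = zeta n ^ (k.val * w.val)
    rw [hSvdef]
    simp only [map_mul, map_pow, aeval_X]
    show (pt n k 0) ^ (i-1) * pt n k w = zeta n ^ (k.val * w.val)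
    have h0 : pt n k 0 = 1 := by
      show zeta n ^ (k.val * (0 : Fin n).val) = 1
      rw [Fin.val_zero, Nat.mul_zero, pow_zero]
    rw [h0, one_pow, one_mul]
    rfl
  have hsurj : Function.Surjective ψ := by
    intro y
    obtain ⟨x, hx⟩ := vand_surj y
    refine ⟨∑ w : Fin n, x w • K.mkQ (SS w), ?_⟩
    rw [map_sum]
    funext k
    rw [Finset.sum_apply]
    calc (∑ w : Fin n, (ψ (x w • K.mkQ (SS w))) k)
        = ∑ w : Fin n, x w * zeta n ^ (k.val * w.val) := by
          refine Finset.sum_congr rfl fun w _ => ?_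
          rw [map_smul, hψS w]
          simp
      _ = y k := hx k
  have hlb : n ≤ finrank ℂ (↥(Rdeg n i) ⧸ K) := by
    calc n = finrank ℂ (Fin n → ℂ) := by simp
      _ = finrank ℂ ↥(LinearMap.range ψ) := by
          rw [LinearMap.range_eq_top.mpr hsurj, finrank_top]
      _ ≤ finrank ℂ (↥(Rdeg n i) ⧸ K) := LinearMap.finrank_range_le ψ
  have hfirst : finrank ℂ (↥(Rdeg n i) ⧸ K) = n := le_antisymm hub hlb
  refine ⟨hfirst, ?_⟩
  have hsum := Submodule.finrank_quotient_add_finrank K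
  have hiso : finrank ℂ ↥((Delta n).restrictScalars ℂ ⊓ Rdeg n i) = finrank ℂ ↥K := by
    rw [inf_comm ((Delta n).restrictScalars ℂ) (Rdeg n i), ← Submodule.map_comap_subtype]
    exact (LinearEquiv.finrank_eq
      (Submodule.equivMapOfInjective _ (Submodule.injective_subtype _) K)).symm
  rw [hiso]
  omega

end
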